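/- Let P be a finite set of points in the plane in general position, and let p, q ∈ P be such that pq is an edge of the Delaunay triangulation of P whose two adjacent Delaunay triangles are pqr⁺ and pqr⁻. Then the angle at which p sees the Voronoi edge e_pq (the common edge of the Voronoi cells of p and q) equals π − (∠pr⁺q + ∠pr⁻q), and equals the angle at which q sees e_pq. -/

import Mathlib

open Real EuclideanGeometry

abbrev E2 := EuclideanSpace ℝ (Fin 2)

open scoped RealInnerProductSpace

noncomputable section

instance : Fact (Module.finrank ℝ E2 = 2) := ⟨finrank_euclideanSpace_fin⟩

instance : Module.Oriented ℝ E2 (Fin 2) :=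
  ⟨Module.Basis.orientation (EuclideanSpace.basisFun (Fin 2) ℝ).toBasis⟩

private lemma decomp (w d z : E2) (hw : w ≠ 0) (hd : d ≠ 0) (hwd : ⟪w, d⟫ = 0) :
    ∃ μ ρ : ℝ, z = μ • w + ρ • d := by
  have hli : LinearIndependent ℝ ![w, d] := by
    rw [linearIndependent_fin2]
    refine ⟨hd, fun r hr => hw ?_⟩
    simp only [Matrix.cons_val_one, Matrix.head_cons, Matrix.cons_val_zero] at hr
    have h1 : ⟪w, d⟫ = r * ‖d‖ ^ 2 := by
      rw [← hr, real_inner_smul_left, real_inner_self_eq_norm_sq]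
    have hd2 : (0:ℝ) < ‖d‖ ^ 2 := pow_pos (norm_pos_iff.mpr hd) 2
    have hr0 : r = 0 := by
      rw [hwd] at h1
      rcases mul_eq_zero.mp h1.symm with h | h
      · exact h
      · exact absurd h hd2.ne'
    rw [← hr, hr0, zero_smul]
  have hcard : Fintype.card (Fin 2) = Module.finrank ℝ E2 := by
    simp [finrank_euclideanSpace_fin]
  let B := basisOfLinearIndependentOfCardEqFinrank hli hcard
  have hB0 : B 0 = w := by
    simp [B, coe_basisOfLinearIndependentOfCardEqFinrank]
  have hB1 : B 1 = d := by
    simp [B, coe_basisOfLinearIndependentOfCardEqFinrank]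
  have hz := B.sum_repr z
  rw [Fin.sum_univ_two, hB0, hB1] at hz
  exact ⟨B.repr z 0, B.repr z 1, hz.symm⟩

private lemma aux_sign (p q x a b : E2) (hd : a - b ≠ 0)
    (hperp : ⟪q - p, a - b⟫ = 0)
    (hbp : (0:ℝ) < ⟪q - p, b - p⟫)
    (hxp : (0:ℝ) ≤ ⟪a - b, x - p⟫)
    (hsx : (∡ q p x).sign = 1) :
    (∡ b p a).sign = 1 := by
  set o : Orientation ℝ E2 (Fin 2) := Module.Oriented.positiveOrientation with ho
  have hw : q - p ≠ 0 := by
    rintro h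
    rw [h, inner_zero_left] at hbp
    exact lt_irrefl 0 hbp
  obtain ⟨μ, ρ, hz⟩ := decomp (q - p) (a - b) (x - p) hw hd hperp
  obtain ⟨c, t, hbdec⟩ := decomp (q - p) (a - b) (b - p) hw hd hperp
  have hc : (0:ℝ) < c := by
    have : ⟪q - p, b - p⟫ = c * ‖q - p‖ ^ 2 := by
      rw [hbdec, inner_add_right, real_inner_smul_right, real_inner_smul_right, hperp,
        real_inner_self_eq_norm_sq]
      ring
    rw [this] at hbp
    have hwnorm : (0:ℝ) < ‖q - p‖ ^ 2 := pow_pos (norm_pos_iff.mpr hw) 2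
    nlinarith
  have hρ : (0:ℝ) ≤ ρ := by
    have h2 : ⟪a - b, q - p⟫ = 0 := by rw [real_inner_comm]; exact hperp
    have : ⟪a - b, x - p⟫ = ρ * ‖a - b‖ ^ 2 := by
      rw [hz, inner_add_right, real_inner_smul_right, real_inner_smul_right, h2,
        real_inner_self_eq_norm_sq]
      ring
    rw [this] at hxp
    have hdnorm : (0:ℝ) < ‖a - b‖ ^ 2 := pow_pos (norm_pos_iff.mpr hd) 2
    nlinarith
  have hqpx : (∡ q p x).sign = (o.oangle (q - p) (x - p)).sign := by
    rw [oangle, ho]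
    norm_num [vsub_eq_sub]
  rw [hqpx, hz, o.oangle_sign_smul_add_right] at hsx
  rw [o.oangle_sign_smul_right] at hsx
  have hρpos : (0:ℝ) < ρ := by
    rcases eq_or_lt_of_le hρ with h | h
    · rw [← h] at hsx
      simp at hsx
    · exact h
  rw [sign_pos hρpos, one_mul] at hsx
  have hgoal : (∡ b p a).sign = (o.oangle (b - p) (a - p)).sign := by
    rw [oangle, ho]
    norm_num [vsub_eq_sub]
  rw [hgoal]
  have hap : a - p = (b - p) + (a - b) := by abel
  rw [hap, o.oangle_sign_add_right, hbdec, o.oangle_sign_add_smul_left,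
    o.oangle_sign_smul_left, sign_pos hc, one_mul]
  exact hsx

end

set_option maxHeartbeats 2000000 in
theorem voronoi_edge_extent_eq (P : Finset E2) (p q rp rm a b : E2)
    (hp : p ∈ P) (hq : q ∈ P) (hrp : rp ∈ P) (hrm : rm ∈ P) (hpq : p ≠ q)
    (hindep : ¬ Collinear ℝ ({p, q, rp} : Set E2))
    (hindep' : ¬ Collinear ℝ ({p, q, rm} : Set E2))
    (hapq : dist a p = dist a q) (harp : dist a p = dist a rp)
    (hbpq : dist b p = dist b q) (hbrm : dist b p = dist b rm)
    (haempty : ∀ x ∈ P, dist a p ≤ dist a x)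
    (hbempty : ∀ x ∈ P, dist b p ≤ dist b x)
    (hopp : (affineSpan ℝ ({p, q} : Set E2)).SOppSide rp rm)
    (hab : a ≠ b) :
    ∠ a p b = π - (∠ p rp q + ∠ p rm q) ∧ ∠ a p b = ∠ a q b := by
  -- non-degeneracy
  have hap : a ≠ p := by
    rintro rfl
    rw [dist_self] at hapq
    exact hpq (eq_of_dist_eq_zero hapq.symm)
  have haq : a ≠ q := by
    rintro rfl
    rw [dist_self] at hapq
    exact hpq (eq_of_dist_eq_zero hapq).symm
  have hbp : b ≠ p := by
    rintro rfl
    rw [dist_self] at hbpq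
    exact hpq (eq_of_dist_eq_zero hbpq.symm)
  have hbq : b ≠ q := by
    rintro rfl
    rw [dist_self] at hbpq
    exact hpq (eq_of_dist_eq_zero hbpq).symm
  have hrpp : rp ≠ p := by
    rintro rfl
    exact hindep ((collinear_pair ℝ rp q).subset (by intro y hy; simp at hy ⊢; tauto))
  have hrpq : rp ≠ q := by
    rintro rfl
    exact hindep ((collinear_pair ℝ p rp).subset (by intro y hy; simp at hy ⊢; tauto))
  have hrmp : rm ≠ p := by
    rintro rfl
    exact hindep' ((collinear_pair ℝ rm q).subset (by intro y hy; simp at hy ⊢; tauto))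
  have hrmq : rm ≠ q := by
    rintro rfl
    exact hindep' ((collinear_pair ℝ p rm).subset (by intro y hy; simp at hy ⊢; tauto))
  -- spheres
  obtain ⟨sA, hcenA, hradA⟩ : ∃ s : EuclideanGeometry.Sphere E2,
      s.center = a ∧ s.radius = dist a p := ⟨⟨a, dist a p⟩, rfl, rfl⟩
  obtain ⟨sB, hcenB, hradB⟩ : ∃ s : EuclideanGeometry.Sphere E2,
      s.center = b ∧ s.radius = dist b p := ⟨⟨b, dist b p⟩, rfl, rfl⟩
  have hpA : p ∈ sA := by
    rw [EuclideanGeometry.mem_sphere, hcenA, hradA, dist_comm]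
  have hqA : q ∈ sA := by
    rw [EuclideanGeometry.mem_sphere, hcenA, hradA, dist_comm]; exact hapq.symm
  have hrpA : rp ∈ sA := by
    rw [EuclideanGeometry.mem_sphere, hcenA, hradA, dist_comm]; exact harp.symm
  have hpB : p ∈ sB := by
    rw [EuclideanGeometry.mem_sphere, hcenB, hradB, dist_comm]
  have hqB : q ∈ sB := by
    rw [EuclideanGeometry.mem_sphere, hcenB, hradB, dist_comm]; exact hbpq.symm
  have hrmB : rm ∈ sB := by
    rw [EuclideanGeometry.mem_sphere, hcenB, hradB, dist_comm]; exact hbrm.symm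
  -- inscribed-angle relations
  have hA2 : (2 : ℤ) • (∡ q p a + ∡ p rp q) = (π : Real.Angle) := by
    rw [smul_add, ← hcenA]
    exact Sphere.two_zsmul_oangle_center_add_two_zsmul_oangle_eq_pi hpA hrpA hqA hrpp hrpq hpq
  have hB2 : (2 : ℤ) • (∡ q p b + ∡ p rm q) = (π : Real.Angle) := by
    rw [smul_add, ← hcenB]
    exact Sphere.two_zsmul_oangle_center_add_two_zsmul_oangle_eq_pi hpB hrmB hqB hrmp hrmq hpq
  have hA' := Real.Angle.two_zsmul_eq_pi_iff.mp hA2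
  have hB' := Real.Angle.two_zsmul_eq_pi_iff.mp hB2
  -- bounds on base angles
  have hu : |(∡ q p a).toReal| < π / 2 := by
    rw [← hcenA]; exact Sphere.abs_oangle_center_right_toReal_lt_pi_div_two hpA hqA
  have hv : |(∡ q p b).toReal| < π / 2 := by
    rw [← hcenB]; exact Sphere.abs_oangle_center_right_toReal_lt_pi_div_two hpB hqB
  set u : ℝ := (∡ q p a).toReal with hudef
  set v : ℝ := (∡ q p b).toReal with hvdef
  have hcu : (∡ q p a) = (u : Real.Angle) := (Real.Angle.coe_toReal _).symm
  have hcv : (∡ q p b) = (v : Real.Angle) := (Real.Angle.coe_toReal _).symm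
  have hu2 : |u| < π / 2 := hu
  have hv2 : |v| < π / 2 := hv
  rw [abs_lt] at hu2 hv2
  -- signs
  have hSrp : (∡ p rp q).sign ≠ 0 := by
    intro h
    rw [oangle_sign_eq_zero_iff_collinear] at h
    refine hindep (h.subset ?_)
    intro y hy; simp at hy ⊢; tauto
  have hSrm : (∡ p rm q).sign ≠ 0 := by
    intro h
    rw [oangle_sign_eq_zero_iff_collinear] at h
    refine hindep' (h.subset ?_)
    intro y hy; simp at hy ⊢; tauto
  have hmemp : p ∈ affineSpan ℝ ({p, q} : Set E2) :=
    mem_affineSpan ℝ (Set.mem_insert _ _)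
  have hmemq : q ∈ affineSpan ℝ ({p, q} : Set E2) :=
    mem_affineSpan ℝ (by simp)
  have hSopp : (∡ p rp q).sign = -(∡ p rm q).sign :=
    hopp.symm.oangle_sign_eq_neg hmemp hmemq
  -- inner product facts
  have hkey : ∀ c : E2, dist c p = dist c q → ⟪q - p, c - p⟫ = ‖q - p‖ ^ 2 / 2 := by
    intro c hc
    have h1 : ‖c - p‖ = ‖c - q‖ := by rw [← dist_eq_norm, ← dist_eq_norm]; exact hc
    have h2 : ‖c - p‖ ^ 2 = ‖c - q‖ ^ 2 := by rw [h1]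
    have h3 : c - q = (c - p) - (q - p) := by abel
    rw [h3] at h2
    rw [norm_sub_sq_real (c - p) (q - p)] at h2
    have h4 := real_inner_comm (q - p) (c - p)
    linarith
  have hqp0 : q - p ≠ 0 := sub_ne_zero.mpr (Ne.symm hpq)
  have hnq : (0:ℝ) < ‖q - p‖ ^ 2 := pow_pos (norm_pos_iff.mpr hqp0) 2
  have hinna : ⟪q - p, a - p⟫ = ‖q - p‖ ^ 2 / 2 := hkey a hapq
  have hinnb : ⟪q - p, b - p⟫ = ‖q - p‖ ^ 2 / 2 := hkey b hbpq
  have hperp : ⟪q - p, a - b⟫ = 0 := by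
    have h : a - b = (a - p) - (b - p) := by abel
    rw [h, inner_sub_right, hinna, hinnb]
    ring
  have hperp' : ⟪q - p, b - a⟫ = 0 := by
    have h : b - a = -(a - b) := by abel
    rw [h, inner_neg_right, hperp, neg_zero]
  have hinnbpos : (0:ℝ) < ⟪q - p, b - p⟫ := by rw [hinnb]; linarith
  have hinnapos : (0:ℝ) < ⟪q - p, a - p⟫ := by rw [hinna]; linarith
  -- emptiness facts
  have hkey2 : ∀ c c' x : E2, dist c x = dist c p → dist c' p ≤ dist c' x →
      (0:ℝ) ≤ ⟪c - c', x - p⟫ := by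
    intro c c' x h1 h2
    have h1' : ‖x - c‖ = ‖p - c‖ := by
      rw [← dist_eq_norm, ← dist_eq_norm, dist_comm x c, dist_comm p c]; exact h1
    have h2' : ‖p - c'‖ ≤ ‖x - c'‖ := by
      rw [← dist_eq_norm, ← dist_eq_norm, dist_comm p c', dist_comm x c']; exact h2
    have h2'' : ‖p - c'‖ ^ 2 ≤ ‖x - c'‖ ^ 2 := by
      have := norm_nonneg (p - c')
      nlinarith
    have ea : x - c' = (x - c) + (c - c') := by abel
    have eb : p - c' = (p - c) + (c - c') := by abel
    have e1 : ‖x - c'‖ ^ 2 = ‖x - c‖ ^ 2 + 2 * ⟪x - c, c - c'⟫ + ‖c - c'‖ ^ 2 := by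
      rw [ea, norm_add_sq_real]
    have e2 : ‖p - c'‖ ^ 2 = ‖p - c‖ ^ 2 + 2 * ⟪p - c, c - c'⟫ + ‖c - c'‖ ^ 2 := by
      rw [eb, norm_add_sq_real]
    have e3 : ⟪x - c, c - c'⟫ - ⟪p - c, c - c'⟫ = ⟪x - p, c - c'⟫ := by
      rw [← inner_sub_left]
      congr 1
      abel
    have e4 := real_inner_comm (x - p) (c - c')
    have h1'' : ‖x - c‖ ^ 2 = ‖p - c‖ ^ 2 := by rw [h1']
    linarith
  have hrp_empty : (0:ℝ) ≤ ⟪a - b, rp - p⟫ :=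
    hkey2 a b rp harp.symm (hbempty rp hrp)
  have hrm_empty : (0:ℝ) ≤ ⟪b - a, rm - p⟫ :=
    hkey2 b a rm hbrm.symm (haempty rm hrm)
  -- rotate signs
  have hrot_rp : (∡ p rp q).sign = (∡ q p rp).sign := oangle_rotate_sign q p rp
  have hrot_rm : (∡ p rm q).sign = (∡ q p rm).sign := oangle_rotate_sign q p rm
  -- oriented angle between a and b at p and q
  have hpi := Real.pi_pos
  have htoReal : ∀ w : ℝ, -π < w → w ≤ π → ((w : ℝ) : Real.Angle).toReal = w :=
    fun w h1 h2 => Real.Angle.toReal_coe_eq_self_iff.mpr ⟨h1, h2⟩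
  have hoab : ∡ a p b = ((v - u : ℝ) : Real.Angle) := by
    have h1 : ∡ a p q + ∡ q p b = ∡ a p b := oangle_add hap (Ne.symm hpq) hbp
    have h2 : ∡ a p q = -∡ q p a := oangle_rev q p a
    rw [h2, hcu, hcv] at h1
    rw [← h1, Real.Angle.coe_sub]
    abel
  have hoba : ∡ b p a = ((u - v : ℝ) : Real.Angle) := by
    rw [oangle_rev a p b, hoab, ← Real.Angle.coe_neg]
    congr 1
    ring
  have hoaqb : ∡ a q b = ((u - v : ℝ) : Real.Angle) := by
    have h1 : ∡ a q p + ∡ p q b = ∡ a q b := oangle_add haq hpq hbq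
    have h2 : ∡ a q p = (u : Real.Angle) := by
      rw [oangle_rev p q a, ← oangle_eq_oangle_of_dist_eq hapq, oangle_rev q p a, hcu, neg_neg]
    have h3 : ∡ p q b = ((-v : ℝ) : Real.Angle) := by
      rw [← oangle_eq_oangle_of_dist_eq hbpq, oangle_rev q p b, hcv, Real.Angle.coe_neg]
    rw [h2, h3] at h1
    rw [← h1, Real.Angle.coe_sub, Real.Angle.coe_neg]
    abel
  -- unoriented angles at p and q between a and b
  have habv : ∠ a p b = |v - u| := by
    rw [angle_eq_abs_oangle_toReal hap hbp, hoab,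
      htoReal (v - u) (by linarith [hu2.1, hu2.2, hv2.1, hv2.2]) (by linarith [hu2.1, hu2.2, hv2.1, hv2.2])]
  have haqb : ∠ a q b = |u - v| := by
    rw [angle_eq_abs_oangle_toReal haq hbq, hoaqb,
      htoReal (u - v) (by linarith [hu2.1, hu2.2, hv2.1, hv2.2]) (by linarith [hu2.1, hu2.2, hv2.1, hv2.2])]
  have goal2 : ∠ a p b = ∠ a q b := by rw [habv, haqb, abs_sub_comm]
  -- the main combination lemma
  have comb : ∀ (x c : E2) (w : ℝ), x ≠ p → x ≠ q → ∡ q p c = (w : Real.Angle) → |w| < π / 2 →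
      (∡ q p c + ∡ p x q = ((π / 2 : ℝ) : Real.Angle) ∨
        ∡ q p c + ∡ p x q = ((-π / 2 : ℝ) : Real.Angle)) →
      ((∡ p x q).sign = 1 → ∠ p x q = π / 2 - w) ∧
      ((∡ p x q).sign = -1 → ∠ p x q = π / 2 + w) := by
    intro x c w hxp hxq hcw hwlt hsum
    rw [abs_lt] at hwlt
    have habs : ∠ p x q = |(∡ p x q).toReal| :=
      angle_eq_abs_oangle_toReal (Ne.symm hxp) (Ne.symm hxq)
    rcases hsum with h | h
    · have hx : ∡ p x q = ((π / 2 - w : ℝ) : Real.Angle) := by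
        rw [Real.Angle.coe_sub, ← hcw, ← h]
        abel
      have ht : (∡ p x q).toReal = π / 2 - w := by
        rw [hx, htoReal (π / 2 - w) (by linarith) (by linarith)]
      constructor
      · intro _
        rw [habs, ht, abs_of_pos (by linarith)]
      · intro hs1
        exfalso
        have hneg : (∡ p x q).toReal < 0 := Real.Angle.toReal_neg_iff_sign_neg.mpr hs1
        rw [ht] at hneg
        linarith
    · have hx : ∡ p x q = ((-π / 2 - w : ℝ) : Real.Angle) := by
        rw [Real.Angle.coe_sub, ← hcw, ← h]
        abel
      have ht : (∡ p x q).toReal = -π / 2 - w := by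
        rw [hx, htoReal (-π / 2 - w) (by linarith) (by linarith)]
      constructor
      · intro hs1
        exfalso
        have hneg : (∡ p x q).toReal < 0 := by rw [ht]; linarith
        have := Real.Angle.toReal_neg_iff_sign_neg.mp hneg
        rw [hs1] at this
        exact (by decide : ¬((1 : SignType) = -1)) this
      · intro _
        rw [habs, ht, abs_of_neg (by linarith)]
        ring
  have combA := comb rp a u hrpp hrpq hcu hu hA'
  have combB := comb rm b v hrmp hrmq hcv hv hB'
  -- final case analysis on the side of rp
  refine ⟨?_, goal2⟩
  rcases hs0 : (∡ p rp q).sign with _ | _ | _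
  · exact absurd hs0 hSrp
  · -- rp on the negative side
    have hs : (∡ p rp q).sign = -1 := hs0
    have hms : (∡ p rm q).sign = 1 := by
      rw [hs] at hSopp
      exact (neg_inj.mp hSopp).symm
    have h1 : ∠ p rp q = π / 2 + u := combA.2 hs
    have h2 : ∠ p rm q = π / 2 - v := combB.1 hms
    have hsx : (∡ q p rm).sign = 1 := by rw [← hrot_rm]; exact hms
    have hsign_ab : (∡ a p b).sign = 1 :=
      aux_sign p q rm b a (sub_ne_zero.mpr (Ne.symm hab)) hperp' hinnapos hrm_empty hsx
    have hvu : 0 ≤ v - u := by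
      have h0 : 0 ≤ (∡ a p b).toReal :=
        Real.Angle.toReal_nonneg_iff_sign_nonneg.mpr (by rw [hsign_ab]; decide)
      rwa [hoab, htoReal (v - u) (by linarith [hu2.1, hu2.2, hv2.1, hv2.2])
        (by linarith [hu2.1, hu2.2, hv2.1, hv2.2])] at h0
    rw [habv, h1, h2, abs_of_nonneg (by linarith)]
    ring
  · -- rp on the positive side
    have hs : (∡ p rp q).sign = 1 := hs0
    have hms : (∡ p rm q).sign = -1 := by
      rw [hs] at hSopp
      exact neg_eq_iff_eq_neg.mp hSopp.symm
    have h1 : ∠ p rp q = π / 2 - u := combA.1 hs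
    have h2 : ∠ p rm q = π / 2 + v := combB.2 hms
    have hsx : (∡ q p rp).sign = 1 := by rw [← hrot_rp]; exact hs
    have hsign_ba : (∡ b p a).sign = 1 :=
      aux_sign p q rp a b (sub_ne_zero.mpr hab) hperp hinnbpos hrp_empty hsx
    have huv : 0 ≤ u - v := by
      have h0 : 0 ≤ (∡ b p a).toReal :=
        Real.Angle.toReal_nonneg_iff_sign_nonneg.mpr (by rw [hsign_ba]; decide)
      rwa [hoba, htoReal (u - v) (by linarith [hu2.1, hu2.2, hv2.1, hv2.2])
        (by linarith [hu2.1, hu2.2, hv2.1, hv2.2])] at h0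
    rw [habv, h1, h2, abs_of_nonpos (by linarith)]
    ring
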